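/- Let L be a real symmetric positive semidefinite N×N matrix, σ > 0, e ∈ ℝ^N, X an N×M real matrix with M ≥ 1, and set Θ(t) := L + t e eᵀ + σ⁻² I. Then Θ(0) is invertible, and the function F(t) := log det Θ(t) − (1/M)·Tr(Xᵀ Θ(t) X) has derivative at t = 0 equal to eᵀ Θ(0)⁻¹ e − (1/M)·‖Xᵀ e‖₂², i.e. HasDerivAt F (eᵀ Θ(0)⁻¹ e − (1/M)‖Xᵀe‖₂²) 0. -/

import Mathlib

open Matrix

/-- **Edge-sensitivity of the graphical-Lasso objective.** For a real symmetric
positive semidefinite `L`, `σ > 0`, and `Θ(t) = L + t e eᵀ + σ⁻² I`, the matrix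
`Θ(0)` is invertible and the function
`F(t) = log det Θ(t) − (1/M)·Tr(Xᵀ Θ(t) X)` has derivative
`eᵀ Θ(0)⁻¹ e − (1/M)·‖Xᵀ e‖₂²` at `t = 0`. -/
theorem edge_sensitivity_hasDerivAt {N M : ℕ} (hM : 1 ≤ M)
    (L : Matrix (Fin N) (Fin N) ℝ) (hL : L.IsSymm)
    (hpsd : ∀ x : Fin N → ℝ, 0 ≤ x ⬝ᵥ L.mulVec x)
    (σ : ℝ) (hσ : 0 < σ) (e : Fin N → ℝ) (X : Matrix (Fin N) (Fin M) ℝ) :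
    IsUnit (L + (σ ^ 2)⁻¹ • (1 : Matrix (Fin N) (Fin N) ℝ)) ∧
    HasDerivAt
      (fun t : ℝ =>
        Real.log (Matrix.det (L + t • Matrix.vecMulVec e e
            + (σ ^ 2)⁻¹ • (1 : Matrix (Fin N) (Fin N) ℝ)))
          - (1 / (M : ℝ)) * Matrix.trace (Xᵀ * (L + t • Matrix.vecMulVec e e
            + (σ ^ 2)⁻¹ • (1 : Matrix (Fin N) (Fin N) ℝ)) * X))
      (e ⬝ᵥ (L + (σ ^ 2)⁻¹ • (1 : Matrix (Fin N) (Fin N) ℝ))⁻¹.mulVec e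
        - (1 / (M : ℝ)) * ∑ j, (Xᵀ.mulVec e j) ^ 2)
      0 := by
  set A := L + (σ ^ 2)⁻¹ • (1 : Matrix (Fin N) (Fin N) ℝ) with hA
  have hApd : A.PosDef := by
    refine Matrix.PosDef.of_dotProduct_mulVec_pos ?_ ?_
    · rw [Matrix.IsHermitian, conjTranspose_eq_transpose_of_trivial]
      simp [hA, Matrix.transpose_add, hL.eq, Matrix.transpose_smul]
    · intro x hx
      have h1 : (0:ℝ) < (σ^2)⁻¹ := by positivity
      have h2 : 0 < x ⬝ᵥ x := by
        simpa using dotProduct_self_star_pos_iff.mpr hx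
      have : star x ⬝ᵥ A *ᵥ x = x ⬝ᵥ L *ᵥ x + (σ^2)⁻¹ * (x ⬝ᵥ x) := by
        simp [hA, Matrix.add_mulVec, Matrix.smul_mulVec, dotProduct_add,
          dotProduct_smul, smul_eq_mul]
      rw [this]
      have := hpsd x
      nlinarith
  have hdet : 0 < A.det := hApd.det_pos
  have hUnit : IsUnit A := hApd.isUnit
  refine ⟨hUnit, ?_⟩
  set c := e ⬝ᵥ A⁻¹.mulVec e with hc
  set S := ∑ j, (Xᵀ.mulVec e j) ^ 2 with hS
  have hkey : ∀ t : ℝ, (L + t • Matrix.vecMulVec e e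
      + (σ ^ 2)⁻¹ • (1 : Matrix (Fin N) (Fin N) ℝ)).det = A.det * (1 + t * c) := by
    intro t
    have hre : L + t • Matrix.vecMulVec e e + (σ ^ 2)⁻¹ • (1 : Matrix (Fin N) (Fin N) ℝ)
        = A + replicateCol Unit (t • e) * replicateRow Unit e := by
      rw [← Matrix.vecMulVec_eq Unit]
      have : Matrix.vecMulVec (t • e) e = t • Matrix.vecMulVec e e := by
        ext i j; simp [Matrix.vecMulVec_apply, mul_assoc]
      rw [this, hA]; ring_nf; abel
    rw [hre, Matrix.det_add_replicateCol_mul_replicateRow ((isUnit_iff_isUnit_det A).mp hUnit)]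
    congr 1
    rw [Matrix.det_unique]
    simp [Matrix.mul_apply, Matrix.replicateRow, Matrix.replicateCol, hc, dotProduct, Matrix.mulVec, dotProduct,
      Finset.mul_sum, Finset.sum_mul]
    rw [Finset.sum_comm]
    exact Finset.sum_congr rfl fun i _ => Finset.sum_congr rfl fun k _ => by ring
  have htrV : Matrix.trace (Xᵀ * Matrix.vecMulVec e e * X) = S := by
    simp only [hS, Matrix.trace, Matrix.diag, Matrix.mul_apply, Matrix.vecMulVec_apply,
      Matrix.transpose_apply, Matrix.mulVec, dotProduct, sq, Finset.sum_mul, Finset.mul_sum]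
    refine Finset.sum_congr rfl fun j _ => ?_
    rw [Finset.sum_comm]
    exact Finset.sum_congr rfl fun i _ => Finset.sum_congr rfl fun k _ => by ring
  have htr : ∀ t : ℝ, Matrix.trace (Xᵀ * (L + t • Matrix.vecMulVec e e
      + (σ ^ 2)⁻¹ • (1 : Matrix (Fin N) (Fin N) ℝ)) * X)
      = Matrix.trace (Xᵀ * A * X) + t * S := by
    intro t
    have : L + t • Matrix.vecMulVec e e + (σ ^ 2)⁻¹ • (1 : Matrix (Fin N) (Fin N) ℝ)
        = A + t • Matrix.vecMulVec e e := by rw [hA]; abel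
    rw [this, Matrix.mul_add, Matrix.add_mul, Matrix.trace_add, Matrix.mul_smul,
      Matrix.smul_mul, Matrix.trace_smul, htrV, smul_eq_mul]
  have hfun : (fun t : ℝ =>
        Real.log (Matrix.det (L + t • Matrix.vecMulVec e e
            + (σ ^ 2)⁻¹ • (1 : Matrix (Fin N) (Fin N) ℝ)))
          - (1 / (M : ℝ)) * Matrix.trace (Xᵀ * (L + t • Matrix.vecMulVec e e
            + (σ ^ 2)⁻¹ • (1 : Matrix (Fin N) (Fin N) ℝ)) * X))
      = fun t : ℝ => Real.log (A.det * (1 + t * c))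
          - (1 / (M : ℝ)) * (Matrix.trace (Xᵀ * A * X) + t * S) := by
    funext t; rw [hkey t, htr t]
  rw [hfun]
  have h1 : HasDerivAt (fun t : ℝ => A.det * (1 + t * c)) (A.det * c) 0 := by
    have := (((hasDerivAt_id (0:ℝ)).mul_const c).const_add 1).const_mul A.det
    simpa using this
  have hne : A.det * (1 + 0 * c) ≠ 0 := by simpa using hdet.ne'
  have hlog : HasDerivAt (fun t : ℝ => Real.log (A.det * (1 + t * c))) c 0 := by
    have := h1.log hne
    simpa [hdet.ne', mul_div_assoc, mul_div_cancel_left₀] using this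
  have h2 : HasDerivAt (fun t : ℝ =>
      (1 / (M : ℝ)) * (Matrix.trace (Xᵀ * A * X) + t * S)) ((1 / (M : ℝ)) * S) 0 := by
    have := (((hasDerivAt_id (0:ℝ)).mul_const S).const_add
      (Matrix.trace (Xᵀ * A * X))).const_mul (1 / (M : ℝ))
    simpa using this
  exact hlog.sub h2
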